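/- The Kullback–Leibler divergence of μ^{2,0} with respect to UNIF equals 7/3 − log 6; equivalently, ∫₀^{2π} (1−(4/3)·cos θ+(1/3)·cos 2θ)·log(1−(4/3)·cos θ+(1/3)·cos 2θ) dθ/(2π) = 7/3 − log 6. -/

import Mathlib

open MeasureTheory Complex Filter Topology intervalIntegral
open scoped ENNReal Real

noncomputable section

/-- Normalized arclength (uniform) probability measure on the unit circle 𝕋 ⊆ ℂ. -/
def UNIF : Measure ℂ :=
  (ENNReal.ofReal (2 * Real.pi))⁻¹ •
    (volume.restrict (Set.Ico (0 : ℝ) (2 * Real.pi))).map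
      (fun θ : ℝ => Complex.exp (θ * Complex.I))

open Classical in
/-- Kullback–Leibler divergence 𝒦(ν|μ) ∈ [0,∞]. -/
def KL (ν μ : Measure ℂ) : ℝ≥0∞ :=
  if ν ≪ μ ∧ Integrable (fun z => Real.log ((ν.rnDeriv μ) z).toReal) ν then
    ENNReal.ofReal (∫ z, Real.log ((ν.rnDeriv μ) z).toReal ∂ν)
  else ⊤

/-- Measure with density `1 − g cos θ` with respect to UNIF (z = e^{iθ}). -/
def mu10 (g : ℝ) : Measure ℂ :=
  UNIF.withDensity fun z => ENNReal.ofReal (1 - g * Real.cos z.arg)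

/-- Measure with density `1 − g cos 2θ` with respect to UNIF (z = e^{iθ}). -/
def mu11 (g : ℝ) : Measure ℂ :=
  UNIF.withDensity fun z => ENNReal.ofReal (1 - g * Real.cos (2 * z.arg))

/-- Measure with density `1 − (4g/3) cos θ + (g/3) cos 2θ` with respect to UNIF (z = e^{iθ}). -/
def mu20 (g : ℝ) : Measure ℂ :=
  UNIF.withDensity fun z =>
    ENNReal.ofReal (1 - (4 * g / 3) * Real.cos z.arg + (g / 3) * Real.cos (2 * z.arg))


lemma neg_log_le (x : ℝ) (hx : 0 < x) : -Real.log x ≤ 2 * x ^ (-(1:ℝ)/2) := by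
  have h1 : Real.log (x ^ (-(1:ℝ)/2)) ≤ x ^ (-(1:ℝ)/2) - 1 :=
    Real.log_le_sub_one_of_pos (Real.rpow_pos_of_pos hx _)
  have h2 : Real.log (x ^ (-(1:ℝ)/2)) = (-(1:ℝ)/2) * Real.log x := Real.log_rpow hx _
  have h3 : (0:ℝ) ≤ x ^ (-(1:ℝ)/2) := (Real.rpow_pos_of_pos hx _).le
  nlinarith

lemma neg_log_sin_le {y : ℝ} (h0 : 0 < y) (h2 : y ≤ π/2) :
    -Real.log (Real.sin y) ≤ Real.log (π/2) + 2 * y ^ (-(1:ℝ)/2) := by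
  have hπ := Real.pi_pos
  have hsin : 2/π * y ≤ Real.sin y := Real.mul_le_sin h0.le h2
  have hpos : 0 < 2/π * y := by positivity
  have h1 : Real.log (2/π * y) ≤ Real.log (Real.sin y) :=
    Real.log_le_log hpos hsin
  have h2' : Real.log (2/π * y) = Real.log (2/π) + Real.log y :=
    Real.log_mul (by positivity) h0.ne'
  have h3 : Real.log (2/π) = -Real.log (π/2) := by
    rw [show (2:ℝ)/π = (π/2)⁻¹ by field_simp, Real.log_inv]
  have h4 := neg_log_le y h0
  linarith

lemma intervalIntegrable_log_sin₀ : IntervalIntegrable (fun x => Real.log (Real.sin x)) volume 0 π := by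
  have hπ := Real.pi_pos
  set g : ℝ → ℝ := fun x => Real.log (π/2) + 2 * x ^ (-(1:ℝ)/2) + 2 * (π - x) ^ (-(1:ℝ)/2) with hg
  have hgi : IntervalIntegrable g volume 0 π := by
    apply IntervalIntegrable.add
    apply IntervalIntegrable.add
    · exact intervalIntegrable_const
    · exact (intervalIntegrable_rpow' (by norm_num)).const_mul 2
    · have h := ((intervalIntegrable_rpow' (a := 0) (b := π) (r := -(1:ℝ)/2) (by norm_num)).const_mul 2).comp_sub_left π
      simpa using h.symm
  apply hgi.mono_fun ((Real.measurable_log.comp Real.measurable_sin).aestronglyMeasurable)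
  have hmeas : MeasurableSet (Set.uIoc (0:ℝ) π) := measurableSet_uIoc
  rw [Filter.EventuallyLE, ae_restrict_iff' hmeas]
  apply Filter.Eventually.of_forall
  intro x hx
  rw [Set.uIoc_of_le hπ.le] at hx
  obtain ⟨hx0, hxπ⟩ := hx
  have hgnn : 0 ≤ g x := by
    have hπ3 := Real.pi_gt_three
    have l1 : (0:ℝ) ≤ Real.log (π/2) := Real.log_nonneg (by linarith)
    have l2 : (0:ℝ) ≤ x ^ (-(1:ℝ)/2) := Real.rpow_nonneg hx0.le _
    have l3 : (0:ℝ) ≤ (π - x) ^ (-(1:ℝ)/2) := Real.rpow_nonneg (by linarith) _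
    simp only [hg]; linarith
  have habs : ‖Real.log (Real.sin x)‖ = -Real.log (Real.sin x) := by
    rw [Real.norm_eq_abs, abs_of_nonpos]
    exact Real.log_nonpos (Real.sin_nonneg_of_nonneg_of_le_pi hx0.le hxπ) (Real.sin_le_one x)
  simp only [Function.comp]
  rw [habs]
  have hbound : -Real.log (Real.sin x) ≤ g x := by
    rcases le_or_gt x (π/2) with hc | hc
    · have := neg_log_sin_le hx0 hc
      have l3 : (0:ℝ) ≤ 2 * (π - x) ^ (-(1:ℝ)/2) := by
        have := Real.rpow_nonneg (show (0:ℝ) ≤ π - x by linarith) (-(1:ℝ)/2); linarith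
      simp only [hg]; linarith
    · rcases eq_or_lt_of_le hxπ with rfl | hxπ'
      · simp only [Real.sin_pi, Real.log_zero, neg_zero]; exact hgnn
      · have h0' : 0 < π - x := by linarith
        have h2' : π - x ≤ π/2 := by linarith
        have := neg_log_sin_le h0' h2'
        rw [Real.sin_pi_sub] at this
        have l2 : (0:ℝ) ≤ 2 * x ^ (-(1:ℝ)/2) := by positivity
        simp only [hg]; linarith
  calc -Real.log (Real.sin x) ≤ g x := hbound
    _ ≤ ‖g x‖ := le_abs_self _



lemma ili_log_sin_half : IntervalIntegrable (fun x => Real.log (Real.sin x)) volume 0 (π/2) := by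
  apply intervalIntegrable_log_sin₀.mono_set
  rw [Set.uIcc_of_le (by positivity), Set.uIcc_of_le Real.pi_pos.le]
  exact Set.Icc_subset_Icc le_rfl (by linarith [Real.pi_pos])

lemma ili_log_sin_half' : IntervalIntegrable (fun x => Real.log (Real.sin x)) volume (π/2) π := by
  apply intervalIntegrable_log_sin₀.mono_set
  rw [Set.uIcc_of_le (by linarith [Real.pi_pos]), Set.uIcc_of_le Real.pi_pos.le]
  exact Set.Icc_subset_Icc (by linarith [Real.pi_pos]) le_rfl

lemma ili_log_cos_half : IntervalIntegrable (fun x => Real.log (Real.cos x)) volume 0 (π/2) := by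
  have h := ili_log_sin_half.comp_sub_left (π/2)
  simp only [sub_zero, sub_self] at h
  have h2 := h.symm
  apply h2.congr
  intro x _
  simp [Real.sin_pi_div_two_sub]

lemma integral_log_sin_half : ∫ x in (0:ℝ)..(π/2), Real.log (Real.sin x)
    = (∫ x in (0:ℝ)..π, Real.log (Real.sin x)) / 2 := by
  have hsplit := integral_add_adjacent_intervals (μ := volume)
    (f := fun x => Real.log (Real.sin x)) ili_log_sin_half ili_log_sin_half'
  have hsym : ∫ x in (π/2:ℝ)..π, Real.log (Real.sin x)
      = ∫ x in (0:ℝ)..(π/2), Real.log (Real.sin x) := by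
    have h := intervalIntegral.integral_comp_sub_left (a := 0) (b := π/2)
      (fun x => Real.log (Real.sin x)) π
    simp only [sub_zero] at h
    rw [show π - π/2 = π/2 by ring] at h
    rw [← h]
    apply intervalIntegral.integral_congr
    intro x _
    simp [Real.sin_pi_sub]
  linarith

lemma integral_log_sin_pi : ∫ x in (0:ℝ)..π, Real.log (Real.sin x) = -π * Real.log 2 := by
  have hπ := Real.pi_pos
  set I := ∫ x in (0:ℝ)..π, Real.log (Real.sin x) with hI
  -- duplication
  have hdup : ∫ x in (0:ℝ)..(π/2), Real.log (Real.sin (2*x)) = I/2 := by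
    have h := intervalIntegral.integral_comp_mul_left (a := 0) (b := π/2)
      (fun x => Real.log (Real.sin x)) (c := 2) (by norm_num)
    simp only [mul_zero] at h
    rw [show (2:ℝ) * (π/2) = π by ring] at h
    rw [h]; simp [smul_eq_mul]; ring
  have hcong : ∫ x in (0:ℝ)..(π/2), Real.log (Real.sin (2*x))
      = ∫ x in (0:ℝ)..(π/2), (Real.log 2 + Real.log (Real.sin x) + Real.log (Real.cos x)) := by
    apply intervalIntegral.integral_congr_ae
    have hne : ∀ᵐ x : ℝ ∂volume, x ≠ π/2 := by
      rw [MeasureTheory.ae_iff]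
      simpa using (Real.volume_singleton (a := π/2))
    filter_upwards [hne] with x hx hmem
    rw [Set.uIoc_of_le (by positivity)] at hmem
    obtain ⟨h0, h2⟩ := hmem
    have h2' : x < π/2 := lt_of_le_of_ne h2 hx
    have hs : 0 < Real.sin x := Real.sin_pos_of_pos_of_lt_pi h0 (by linarith)
    have hc : 0 < Real.cos x := Real.cos_pos_of_mem_Ioo ⟨by linarith, h2'⟩
    rw [Real.sin_two_mul, Real.log_mul (by positivity) hc.ne', Real.log_mul (by norm_num) hs.ne']
  have hsplit : ∫ x in (0:ℝ)..(π/2), (Real.log 2 + Real.log (Real.sin x) + Real.log (Real.cos x))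
      = (π/2) * Real.log 2 + I/2 + I/2 := by
    rw [intervalIntegral.integral_add (intervalIntegrable_const.add ili_log_sin_half) ili_log_cos_half,
        intervalIntegral.integral_add intervalIntegrable_const ili_log_sin_half]
    have hcos : ∫ x in (0:ℝ)..(π/2), Real.log (Real.cos x)
        = ∫ x in (0:ℝ)..(π/2), Real.log (Real.sin x) := by
      have h := intervalIntegral.integral_comp_sub_left (a := 0) (b := π/2)
        (fun x => Real.log (Real.sin x)) (π/2)
      simp only [sub_zero, sub_self] at h
      rw [← h]
      apply intervalIntegral.integral_congr
      intro x _
      simp [Real.sin_pi_div_two_sub]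
    rw [hcos, integral_log_sin_half]
    simp [smul_eq_mul]
    rw [← hI]
  have := hdup.symm.trans (hcong.trans hsplit)
  linarith



-- basic cosine integrals
lemma integral_cos_two : ∫ x in (0:ℝ)..π, Real.cos (2*x) = 0 := by
  have h := intervalIntegral.integral_comp_mul_left (a := 0) (b := π) Real.cos
    (c := 2) (by norm_num)
  simp only [mul_zero] at h
  rw [h, integral_cos]
  simp [Real.sin_two_pi]

lemma integral_cos_four : ∫ x in (0:ℝ)..π, Real.cos (4*x) = 0 := by
  have h := intervalIntegral.integral_comp_mul_left (a := 0) (b := π) Real.cos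
    (c := 4) (by norm_num)
  simp only [mul_zero] at h
  rw [h, integral_cos]
  have : Real.sin (4*π) = 0 := by
    rw [show (4:ℝ)*π = 2*(2*π) by ring, Real.sin_two_mul]
    simp [Real.sin_two_pi]
  simp [this]

-- continuity of x ↦ sin x * log (sin x)
lemma cont_sin_log_sin : Continuous (fun x : ℝ => Real.sin x * Real.log (Real.sin x)) :=
  Real.continuous_mul_log.comp Real.continuous_sin

-- derivative of sin x * log sin x  where sin x > 0
lemma hasDerivAt_sin_log_sin {x : ℝ} (hs : 0 < Real.sin x) :
    HasDerivAt (fun x => Real.sin x * Real.log (Real.sin x))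
      (Real.cos x * Real.log (Real.sin x) + Real.cos x) x := by
  have h1 : HasDerivAt Real.sin (Real.cos x) x := Real.hasDerivAt_sin x
  have h2 : HasDerivAt (fun x => Real.log (Real.sin x)) (Real.cos x / Real.sin x) x :=
    h1.log hs.ne'
  have h3 := h1.mul h2
  rw [mul_div_assoc', mul_comm (Real.sin x) (Real.cos x), mul_div_assoc, div_self hs.ne', mul_one] at h3
  exact h3

lemma ili_mul_log_sin (c : ℝ → ℝ) (hc : Continuous c) :
    IntervalIntegrable (fun x => c x * Real.log (Real.sin x)) volume 0 π :=
  intervalIntegrable_log_sin₀.continuousOn_mul hc.continuousOn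

lemma integral_cos2_log_sin : ∫ x in (0:ℝ)..π, Real.cos (2*x) * Real.log (Real.sin x) = -(π/2) := by
  have hπ := Real.pi_pos
  set H : ℝ → ℝ := fun x => Real.cos x * (Real.sin x * Real.log (Real.sin x)) with hH
  have hcont : ContinuousOn H (Set.Icc 0 π) :=
    (Real.continuous_cos.mul cont_sin_log_sin).continuousOn
  have hderiv : ∀ x ∈ Set.Ioo (0:ℝ) π, HasDerivWithinAt H
      (Real.cos (2*x) * Real.log (Real.sin x) + Real.cos x ^ 2) (Set.Ioi x) x := by
    intro x hx
    have hs : 0 < Real.sin x := Real.sin_pos_of_pos_of_lt_pi hx.1 hx.2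
    have h1 : HasDerivAt H
        (-Real.sin x * (Real.sin x * Real.log (Real.sin x)) +
          Real.cos x * (Real.cos x * Real.log (Real.sin x) + Real.cos x)) x :=
      (Real.hasDerivAt_cos x).mul (hasDerivAt_sin_log_sin hs)
    have heq : -Real.sin x * (Real.sin x * Real.log (Real.sin x)) +
          Real.cos x * (Real.cos x * Real.log (Real.sin x) + Real.cos x)
        = Real.cos (2*x) * Real.log (Real.sin x) + Real.cos x ^ 2 := by
      rw [Real.cos_two_mul]
      linear_combination (-Real.log (Real.sin x)) * Real.sin_sq_add_cos_sq x
    rw [heq] at h1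
    exact h1.hasDerivWithinAt
  have hint : IntervalIntegrable
      (fun x => Real.cos (2*x) * Real.log (Real.sin x) + Real.cos x ^ 2) volume 0 π :=
    (ili_mul_log_sin _ (Real.continuous_cos.comp (continuous_const.mul continuous_id))).add
      ((Real.continuous_cos.pow 2).intervalIntegrable 0 π)
  have hftc := intervalIntegral.integral_eq_sub_of_hasDeriv_right_of_le hπ.le hcont hderiv hint
  have hH0 : H 0 = 0 := by simp [hH]
  have hHπ : H π = 0 := by simp [hH]
  rw [hH0, hHπ, sub_zero] at hftc
  have hsplit : ∫ x in (0:ℝ)..π, (Real.cos (2*x) * Real.log (Real.sin x) + Real.cos x ^ 2)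
      = (∫ x in (0:ℝ)..π, Real.cos (2*x) * Real.log (Real.sin x)) + ∫ x in (0:ℝ)..π, Real.cos x ^ 2 := by
    exact intervalIntegral.integral_add
      (ili_mul_log_sin _ (Real.continuous_cos.comp (continuous_const.mul continuous_id)))
      ((Real.continuous_cos.pow 2).intervalIntegrable 0 π)
  rw [hsplit] at hftc
  rw [integral_cos_sq] at hftc
  simp at hftc
  linarith

lemma integral_cos_sq_cos_two : ∫ x in (0:ℝ)..π, Real.cos x ^ 2 * Real.cos (2*x) = π/4 := by
  have hcong : ∀ x : ℝ, Real.cos x ^ 2 * Real.cos (2*x)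
      = 1/4 + Real.cos (2*x) / 2 + Real.cos (4*x) / 4 := by
    intro x
    rw [show (4:ℝ)*x = 2*(2*x) by ring, Real.cos_two_mul (2*x), Real.cos_two_mul x]
    ring
  rw [intervalIntegral.integral_congr (fun x _ => hcong x)]
  have i1 : IntervalIntegrable (fun x : ℝ => 1/4 + Real.cos (2*x) / 2) volume 0 π :=
    (continuous_const.add ((Real.continuous_cos.comp (continuous_const.mul continuous_id)).div_const 2)).intervalIntegrable 0 π
  have i2 : IntervalIntegrable (fun x : ℝ => Real.cos (4*x) / 4) volume 0 π :=
    ((Real.continuous_cos.comp (continuous_const.mul continuous_id)).div_const 4).intervalIntegrable 0 π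
  have i3 : IntervalIntegrable (fun x : ℝ => (1:ℝ)/4) volume 0 π := intervalIntegrable_const
  have i4 : IntervalIntegrable (fun x : ℝ => Real.cos (2*x) / 2) volume 0 π :=
    ((Real.continuous_cos.comp (continuous_const.mul continuous_id)).div_const 2).intervalIntegrable 0 π
  rw [intervalIntegral.integral_add i1 i2, intervalIntegral.integral_add i3 i4]
  have h4π : Real.sin (4*π) = 0 := by
    rw [show (4:ℝ)*π = (4:ℕ)*π by norm_num, Real.sin_nat_mul_pi]
  simp [intervalIntegral.integral_div, integral_cos_two, integral_cos_four, h4π]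
  ring

lemma integral_cos4_log_sin : ∫ x in (0:ℝ)..π, Real.cos (4*x) * Real.log (Real.sin x) = -(π/4) := by
  have hπ := Real.pi_pos
  set H : ℝ → ℝ := fun x => Real.cos x * Real.cos (2*x) * (Real.sin x * Real.log (Real.sin x)) with hH
  have hcont : ContinuousOn H (Set.Icc 0 π) :=
    ((Real.continuous_cos.mul (Real.continuous_cos.comp (continuous_const.mul continuous_id))).mul
      cont_sin_log_sin).continuousOn
  have hderiv : ∀ x ∈ Set.Ioo (0:ℝ) π, HasDerivWithinAt H
      (Real.cos (4*x) * Real.log (Real.sin x) + Real.cos x ^ 2 * Real.cos (2*x)) (Set.Ioi x) x := by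
    intro x hx
    have hs : 0 < Real.sin x := Real.sin_pos_of_pos_of_lt_pi hx.1 hx.2
    have hinner : HasDerivAt (fun x : ℝ => 2*x) 2 x := by
      simpa using (hasDerivAt_id x).const_mul 2
    have hc2 : HasDerivAt (fun x : ℝ => Real.cos (2*x)) (-Real.sin (2*x) * 2) x := by
      exact (Real.hasDerivAt_cos (2*x)).comp x hinner
    have hcc : HasDerivAt (fun x : ℝ => Real.cos x * Real.cos (2*x))
        (-Real.sin x * Real.cos (2*x) + Real.cos x * (-Real.sin (2*x) * 2)) x :=
      (Real.hasDerivAt_cos x).mul hc2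
    have h1 := hcc.mul (hasDerivAt_sin_log_sin hs)
    have heq : (-Real.sin x * Real.cos (2*x) + Real.cos x * (-Real.sin (2*x) * 2)) *
          (Real.sin x * Real.log (Real.sin x)) +
          Real.cos x * Real.cos (2*x) * (Real.cos x * Real.log (Real.sin x) + Real.cos x)
        = Real.cos (4*x) * Real.log (Real.sin x) + Real.cos x ^ 2 * Real.cos (2*x) := by
      rw [show (4:ℝ)*x = 2*(2*x) by ring, Real.cos_two_mul (2*x), Real.cos_two_mul x,
        Real.sin_two_mul]
      linear_combination ((1 - 6 * Real.cos x ^ 2) * Real.log (Real.sin x)) * Real.sin_sq_add_cos_sq x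
    rw [heq] at h1
    exact h1.hasDerivWithinAt
  have hili1 : IntervalIntegrable (fun x => Real.cos (4*x) * Real.log (Real.sin x)) volume 0 π :=
    ili_mul_log_sin _ (Real.continuous_cos.comp (continuous_const.mul continuous_id))
  have hili2 : IntervalIntegrable (fun x : ℝ => Real.cos x ^ 2 * Real.cos (2*x)) volume 0 π :=
    ((Real.continuous_cos.pow 2).mul (Real.continuous_cos.comp (continuous_const.mul continuous_id))).intervalIntegrable 0 π
  have hftc := intervalIntegral.integral_eq_sub_of_hasDeriv_right_of_le hπ.le hcont hderiv
    (hili1.add hili2)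
  have hH0 : H 0 = 0 := by simp [hH]
  have hHπ : H π = 0 := by simp [hH]
  rw [hH0, hHπ, sub_zero, intervalIntegral.integral_add hili1 hili2, integral_cos_sq_cos_two] at hftc
  linarith



lemma ili_mul_log_sin' (c : ℝ → ℝ) (hc : Continuous c) :
    IntervalIntegrable (fun x => c x * Real.log (Real.sin x)) volume 0 π :=
  intervalIntegrable_log_sin₀.continuousOn_mul hc.continuousOn

lemma integral_sin_pow_four : ∫ x in (0:ℝ)..π, Real.sin x ^ 4 = 3*π/8 := by
  have h4 := integral_sin_pow (a := 0) (b := π) 2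
  have h2 := integral_sin_sq (a := 0) (b := π)
  norm_num at h4 h2
  rw [h4]
  ring

lemma integral_sin4_log_sin :
    ∫ x in (0:ℝ)..π, Real.sin x ^ 4 * Real.log (Real.sin x)
      = -(3*π/8) * Real.log 2 + 7*π/32 := by
  have hcong : ∀ x ∈ Set.uIcc (0:ℝ) π, Real.sin x ^ 4 * Real.log (Real.sin x)
      = (3/8) * Real.log (Real.sin x) + (-(1/2)) * (Real.cos (2*x) * Real.log (Real.sin x))
        + (1/8) * (Real.cos (4*x) * Real.log (Real.sin x)) := by
    intro x _
    have hid : Real.sin x ^ 4 = 3/8 - Real.cos (2*x)/2 + Real.cos (4*x)/8 := by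
      rw [show (4:ℝ)*x = 2*(2*x) by ring, Real.cos_two_mul (2*x), Real.cos_two_mul x]
      linear_combination (Real.sin x ^ 2 + 1 - Real.cos x ^ 2) * Real.sin_sq_add_cos_sq x
    rw [hid]; ring
  rw [intervalIntegral.integral_congr hcong]
  have i1 : IntervalIntegrable (fun x => (3/8) * Real.log (Real.sin x)) volume 0 π := by
    simpa using ili_mul_log_sin' (fun _ => (3:ℝ)/8) continuous_const
  have i2 : IntervalIntegrable (fun x => (-(1/2)) * (Real.cos (2*x) * Real.log (Real.sin x))) volume 0 π :=
    (ili_mul_log_sin' _ (Real.continuous_cos.comp (continuous_const.mul continuous_id))).const_mul _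
  have i3 : IntervalIntegrable (fun x => (1/8) * (Real.cos (4*x) * Real.log (Real.sin x))) volume 0 π :=
    (ili_mul_log_sin' _ (Real.continuous_cos.comp (continuous_const.mul continuous_id))).const_mul _
  rw [intervalIntegral.integral_add (i1.add i2) i3, intervalIntegral.integral_add i1 i2,
    intervalIntegral.integral_const_mul, intervalIntegral.integral_const_mul,
    intervalIntegral.integral_const_mul, integral_log_sin_pi, integral_cos2_log_sin,
    integral_cos4_log_sin]
  ring

/-- The density function. -/
noncomputable def fden (θ : ℝ) : ℝ := 1 - (4/3) * Real.cos θ + (1/3) * Real.cos (2*θ)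

lemma fden_two_mul (x : ℝ) : fden (2*x) = (8/3) * Real.sin x ^ 4 := by
  unfold fden
  rw [show (2:ℝ)*(2*x) = 2*(2*x) by ring, Real.cos_two_mul (2*x), Real.cos_two_mul x]
  linear_combination (-(8/3) * (1 - Real.cos x ^2 + Real.sin x ^2)) * Real.sin_sq_add_cos_sq x

lemma fden_nonneg (θ : ℝ) : 0 ≤ fden θ := by
  unfold fden
  rw [Real.cos_two_mul]
  nlinarith [Real.neg_one_le_cos θ, Real.cos_le_one θ]

lemma main_integral :
    ∫ θ in (0:ℝ)..(2*π), fden θ * Real.log (fden θ) = 2*π*(7/3 - Real.log 6) := by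
  have hπ := Real.pi_pos
  have h := intervalIntegral.integral_comp_mul_left (a := 0) (b := π)
    (fun θ => fden θ * Real.log (fden θ)) (c := 2) (by norm_num)
  simp only [mul_zero] at h
  -- h : ∫ x in 0..π, fden (2x) log (fden (2x)) = 2⁻¹ • ∫ θ in 0..2π, ...
  have hcong : ∀ x ∈ Set.uIcc (0:ℝ) π, fden (2*x) * Real.log (fden (2*x))
      = ((8/3) * Real.log (8/3)) * Real.sin x ^ 4
        + (32/3) * (Real.sin x ^ 4 * Real.log (Real.sin x)) := by
    intro x hx
    rw [Set.uIcc_of_le hπ.le] at hx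
    have hs : 0 ≤ Real.sin x := Real.sin_nonneg_of_nonneg_of_le_pi hx.1 hx.2
    rw [fden_two_mul]
    rcases eq_or_lt_of_le hs with hs0 | hs0
    · rw [← hs0]; norm_num
    · rw [Real.log_mul (by norm_num) (by positivity), Real.log_pow]
      push_cast
      ring
  have hval : ∫ x in (0:ℝ)..π, fden (2*x) * Real.log (fden (2*x))
      = π*(7/3 - Real.log 6) := by
    rw [intervalIntegral.integral_congr hcong]
    have i1 : IntervalIntegrable (fun x => ((8/3) * Real.log (8/3)) * Real.sin x ^ 4) volume 0 π :=
      (((Real.continuous_sin.pow 4).intervalIntegrable 0 π).const_mul _)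
    have i2 : IntervalIntegrable (fun x => (32/3) * (Real.sin x ^ 4 * Real.log (Real.sin x))) volume 0 π :=
      ((ili_mul_log_sin' _ (Real.continuous_sin.pow 4)).const_mul _)
    rw [intervalIntegral.integral_add i1 i2, intervalIntegral.integral_const_mul,
      intervalIntegral.integral_const_mul, integral_sin_pow_four, integral_sin4_log_sin]
    have hlog83 : Real.log (8/3) = 3 * Real.log 2 - Real.log 3 := by
      rw [Real.log_div (by norm_num) (by norm_num), show (8:ℝ) = 2^3 by norm_num, Real.log_pow]
      push_cast; ring
    have hlog6 : Real.log 6 = Real.log 2 + Real.log 3 := by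
      rw [show (6:ℝ) = 2*3 by norm_num, Real.log_mul (by norm_num) (by norm_num)]
    rw [hlog83, hlog6]
    ring
  rw [hval] at h
  rw [smul_eq_mul] at h
  linarith

lemma fden_le (θ : ℝ) : fden θ ≤ 8/3 := by
  unfold fden
  nlinarith [Real.neg_one_le_cos θ, Real.cos_le_one θ, Real.neg_one_le_cos (2*θ), Real.cos_le_one (2*θ)]

lemma abs_mul_log_le {y : ℝ} (h0 : 0 ≤ y) (h1 : y ≤ 8/3) : |y * Real.log y| ≤ 5 := by
  rcases eq_or_lt_of_le h0 with rfl | hy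
  · simp
  rcases le_or_gt y 1 with hle | hgt
  · have hlog : Real.log y ≤ 0 := Real.log_nonpos h0 hle
    have hinv : Real.log y⁻¹ ≤ y⁻¹ - 1 := Real.log_le_sub_one_of_pos (by positivity)
    rw [Real.log_inv] at hinv
    have : -(y * Real.log y) ≤ y * (y⁻¹ - 1) := by
      have := mul_le_mul_of_nonneg_left hinv h0
      nlinarith
    have hyy : y * (y⁻¹ - 1) = 1 - y := by field_simp
    rw [abs_of_nonpos (mul_nonpos_of_nonneg_of_nonpos h0 hlog)]
    nlinarith
  · have hlog0 : 0 ≤ Real.log y := Real.log_nonneg hgt.le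
    have hlog : Real.log y ≤ y - 1 := Real.log_le_sub_one_of_pos hy
    rw [_root_.abs_of_nonneg (mul_nonneg h0 hlog0)]
    nlinarith

lemma fden_arg_exp (θ : ℝ) : fden (Complex.arg (Complex.exp (θ * Complex.I))) = fden θ := by
  have hne : Complex.exp (θ * Complex.I) ≠ 0 := Complex.exp_ne_zero _
  have hcos : Real.cos (Complex.arg (Complex.exp (θ * Complex.I))) = Real.cos θ := by
    rw [Complex.cos_arg hne, Complex.norm_exp_ofReal_mul_I, Complex.exp_ofReal_mul_I_re]
    simp
  unfold fden
  rw [Real.cos_two_mul, Real.cos_two_mul, hcos]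

instance : IsProbabilityMeasure UNIF := by
  constructor
  have hπ := Real.pi_pos
  have hmeas : Measurable (fun θ : ℝ => Complex.exp (θ * Complex.I)) := by
    exact (Complex.continuous_exp.comp ((Complex.continuous_ofReal).mul continuous_const)).measurable
  rw [UNIF, Measure.smul_apply, Measure.map_apply hmeas MeasurableSet.univ]
  simp only [Set.preimage_univ, Measure.restrict_apply_univ, Real.volume_Ico, sub_zero, smul_eq_mul]
  exact ENNReal.inv_mul_cancel (by simp [hπ]) ENNReal.ofReal_ne_top

lemma mu20_eq : mu20 1 = UNIF.withDensity (fun z => ENNReal.ofReal (fden z.arg)) := by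
  unfold mu20 fden
  norm_num

/-- 𝒦(μ^{2,0} | UNIF) = 7/3 − log 6. -/
theorem statement12 :
    KL (mu20 1) UNIF = ENNReal.ofReal (7 / 3 - Real.log 6) ∧
    (1 / (2 * Real.pi)) * ∫ θ in (0 : ℝ)..(2 * Real.pi),
        (1 - (4 / 3) * Real.cos θ + (1 / 3) * Real.cos (2 * θ)) *
          Real.log (1 - (4 / 3) * Real.cos θ + (1 / 3) * Real.cos (2 * θ)) =
      7 / 3 - Real.log 6 := by
  have hπ := Real.pi_pos
  have hmain : ∫ θ in (0:ℝ)..(2*Real.pi), fden θ * Real.log (fden θ)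
      = 2*Real.pi*(7/3 - Real.log 6) := main_integral
  have hpart2 : (1 / (2 * Real.pi)) * ∫ θ in (0 : ℝ)..(2 * Real.pi),
        (1 - (4 / 3) * Real.cos θ + (1 / 3) * Real.cos (2 * θ)) *
          Real.log (1 - (4 / 3) * Real.cos θ + (1 / 3) * Real.cos (2 * θ)) =
      7 / 3 - Real.log 6 := by
    have : (∫ θ in (0 : ℝ)..(2 * Real.pi),
        (1 - (4 / 3) * Real.cos θ + (1 / 3) * Real.cos (2 * θ)) *
          Real.log (1 - (4 / 3) * Real.cos θ + (1 / 3) * Real.cos (2 * θ)))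
        = ∫ θ in (0:ℝ)..(2*Real.pi), fden θ * Real.log (fden θ) := rfl
    rw [this, hmain]
    field_simp
  refine ⟨?_, hpart2⟩
  -- measurability facts
  have hfcont : Continuous fden := by
    unfold fden
    continuity
  have hρmeas : Measurable (fun z : ℂ => ENNReal.ofReal (fden z.arg)) :=
    ENNReal.measurable_ofReal.comp ((hfcont.measurable).comp Complex.measurable_arg)
  have hgmeas : Measurable (fun z : ℂ => Real.log (fden z.arg)) :=
    Real.measurable_log.comp ((hfcont.measurable).comp Complex.measurable_arg)
  have hFmeas : Measurable (fun z : ℂ => fden z.arg * Real.log (fden z.arg)) :=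
    ((hfcont.measurable).comp Complex.measurable_arg).mul hgmeas
  -- rnDeriv
  have hrn : (mu20 1).rnDeriv UNIF =ᵐ[UNIF] (fun z => ENNReal.ofReal (fden z.arg)) := by
    rw [mu20_eq]
    exact Measure.rnDeriv_withDensity UNIF hρmeas
  have hac : mu20 1 ≪ UNIF := by
    rw [mu20_eq]; exact withDensity_absolutelyContinuous _ _
  have hrn' : (mu20 1).rnDeriv UNIF =ᵐ[mu20 1] (fun z => ENNReal.ofReal (fden z.arg)) :=
    hac.ae_le hrn
  have haeeq : (fun z => Real.log (((mu20 1).rnDeriv UNIF) z).toReal)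
      =ᵐ[mu20 1] (fun z => Real.log (fden z.arg)) := by
    filter_upwards [hrn'] with z hz
    rw [hz, ENNReal.toReal_ofReal (fden_nonneg _)]
  -- integrability
  have hbound_int : Integrable (fun z : ℂ => Real.log (fden z.arg) * (ENNReal.ofReal (fden z.arg)).toReal) UNIF := by
    apply Integrable.mono' (integrable_const (5:ℝ))
    · exact (hgmeas.mul (ENNReal.measurable_toReal.comp hρmeas)).aestronglyMeasurable
    · filter_upwards with z
      rw [ENNReal.toReal_ofReal (fden_nonneg _)]
      rw [Real.norm_eq_abs, mul_comm]
      exact abs_mul_log_le (fden_nonneg _) (fden_le _)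
  have hint : Integrable (fun z : ℂ => Real.log (fden z.arg)) (mu20 1) := by
    rw [mu20_eq]
    rw [integrable_withDensity_iff hρmeas (by filter_upwards with z using ENNReal.ofReal_lt_top)]
    exact hbound_int
  have hint' : Integrable (fun z => Real.log (((mu20 1).rnDeriv UNIF) z).toReal) (mu20 1) :=
    hint.congr haeeq.symm
  -- KL value
  rw [KL, if_pos ⟨hac, hint'⟩]
  congr 1
  rw [integral_congr_ae haeeq]
  -- now compute ∫ log (fden z.arg) ∂(mu20 1)
  have hwd : ∫ z, Real.log (fden z.arg) ∂(mu20 1)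
      = ∫ z, ((fden z.arg).toNNReal : ℝ) * Real.log (fden z.arg) ∂UNIF := by
    rw [mu20_eq]
    have hN : Measurable (fun w : ℂ => (fden w.arg).toNNReal) :=
      measurable_real_toNNReal.comp ((hfcont.measurable).comp Complex.measurable_arg)
    have : (fun z : ℂ => ENNReal.ofReal (fden z.arg))
        = (fun z : ℂ => ((fun w : ℂ => (fden w.arg).toNNReal) z : ℝ≥0∞)) := rfl
    rw [this, integral_withDensity_eq_integral_smul hN _]
    simp [NNReal.smul_def]
  rw [hwd]
  have hcoe : ∀ z : ℂ, ((fden z.arg).toNNReal : ℝ) = fden z.arg := fun z =>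
    Real.coe_toNNReal _ (fden_nonneg _)
  have hint2 : ∫ z, ((fden z.arg).toNNReal : ℝ) * Real.log (fden z.arg) ∂UNIF
      = ∫ z, fden z.arg * Real.log (fden z.arg) ∂UNIF := by
    congr 1 with z
    rw [hcoe]
  rw [hint2]
  -- UNIF unfold
  have hmeasφ : Measurable (fun θ : ℝ => Complex.exp (θ * Complex.I)) :=
    (Complex.continuous_exp.comp ((Complex.continuous_ofReal).mul continuous_const)).measurable
  rw [UNIF, MeasureTheory.integral_smul_measure]
  rw [integral_map hmeasφ.aemeasurable hFmeas.aestronglyMeasurable]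
  have hcompose : ∫ θ, fden (Complex.arg (Complex.exp (θ * Complex.I))) *
        Real.log (fden (Complex.arg (Complex.exp (θ * Complex.I))))
        ∂(volume.restrict (Set.Ico (0:ℝ) (2*Real.pi)))
      = ∫ θ in Set.Ico (0:ℝ) (2*Real.pi), fden θ * Real.log (fden θ) := by
    apply MeasureTheory.integral_congr_ae
    filter_upwards with θ
    rw [fden_arg_exp]
  rw [hcompose]
  have hIco : ∫ θ in Set.Ico (0:ℝ) (2*Real.pi), fden θ * Real.log (fden θ)
      = ∫ θ in (0:ℝ)..(2*Real.pi), fden θ * Real.log (fden θ) := by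
    rw [intervalIntegral.integral_of_le (by linarith)]
    rw [Measure.restrict_congr_set MeasureTheory.Ico_ae_eq_Ioc]
  rw [hIco, hmain]
  have htoReal : ((ENNReal.ofReal (2 * Real.pi))⁻¹).toReal = (2*Real.pi)⁻¹ := by
    rw [ENNReal.toReal_inv, ENNReal.toReal_ofReal (by linarith)]
  rw [htoReal, smul_eq_mul]
  field_simp



end
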